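/- Monotonicity of the residue: with R^k_t as in the state-decomposition lemma (ρ^k_t = |ψ^k_t⟩⟨ψ^k_t| + R^k_t), the residues satisfy the recursion R^k_{t+1} = U_{t+1}(4p(1-p)|k,α^k_{t,k}⟩⟨k,α^k_{t,k}| + O^k_p(R^k_t))U_{t+1}†, and hence Tr(R^k_{t+1}) = Tr(R^k_t) + 4p(1-p)‖α^k_{t,k}‖². Consequently Tr(R^k_T) = 4p(1-p)Σ_{t=0}^{T-1}‖α^k_{t,k}‖², and ‖ψ^k_T‖² = 1 - 4p(1-p)Σ_{t=0}^{T-1}‖α^k_{t,k}‖². -/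

import Mathlib

open Matrix ComplexOrder Finset

/-- Outer product `|v⟩⟨v|`. -/
noncomputable def outer {n : Type*} [Fintype n] (v : n → ℂ) : Matrix n n ℂ :=
  Matrix.vecMulVec v (star v)

/-- The perfect Grover oracle `Ô^k = (I - 2|k⟩⟨k|) ⊗ I`. -/
noncomputable def oracleHat {N M : ℕ} (k : Fin N) :
    Matrix (Fin N × Fin M) (Fin N × Fin M) ℂ :=
  Matrix.diagonal fun x => if x.1 = k then -1 else 1

/-- The `p`-faulty oracle channel `O^k_p(ρ) = (1-p)·Ô^k ρ Ô^{k†} + p·ρ`. -/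
noncomputable def faultyOracle {N M : ℕ} (p : ℝ) (k : Fin N)
    (ρ : Matrix (Fin N × Fin M) (Fin N × Fin M) ℂ) :
    Matrix (Fin N × Fin M) (Fin N × Fin M) ℂ :=
  ((1 - p : ℝ) : ℂ) • (oracleHat k * ρ * (oracleHat k)ᴴ) + (p : ℂ) • ρ

/-- Projection of a vector onto the subspace `|k⟩ ⊗ ℂ^M`, i.e. `|k, β_k⟩`. -/
def projVec {N M : ℕ} (k : Fin N) (v : Fin N × Fin M → ℂ) : Fin N × Fin M → ℂ :=
  fun x => if x.1 = k then v x else 0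

/-- The positive semidefinite square root of a positive semidefinite matrix
(the Mathlib definition of December 2024, since removed from Mathlib). -/
noncomputable def Matrix.PosSemidef.sqrt {n : Type*} [Fintype n] [DecidableEq n]
    {A : Matrix n n ℂ} (hA : A.PosSemidef) : Matrix n n ℂ :=
  hA.1.eigenvectorUnitary.1 * diagonal ((↑) ∘ (√·) ∘ hA.1.eigenvalues) *
    (star hA.1.eigenvectorUnitary : Matrix n n ℂ)

/-- The trace norm (sum of singular values) of a complex matrix. -/
noncomputable def traceNorm {n : Type*} [Fintype n] [DecidableEq n]
    (A : Matrix n n ℂ) : ℝ :=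
  ((Matrix.posSemidef_conjTranspose_mul_self A).sqrt.trace).re

lemma outer_trace {n : Type*} [Fintype n] (v : n → ℂ) :
    (outer v).trace = ((∑ x, ‖v x‖ ^ 2 : ℝ) : ℂ) := by
  push_cast
  simp [outer, Matrix.trace, Matrix.diag, Matrix.vecMulVec_apply, Complex.mul_conj,
    Complex.normSq_eq_norm_sq]

lemma outer_mulVec {n : Type*} [Fintype n] (A : Matrix n n ℂ) (v : n → ℂ) :
    outer (A.mulVec v) = A * outer v * Aᴴ := by
  ext i j
  simp only [outer, Matrix.mul_apply, Matrix.vecMulVec_apply, Matrix.mulVec, dotProduct,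
    Pi.star_apply, conjTranspose_apply, star_sum, star_mul', Finset.sum_mul, Finset.mul_sum]
  exact Finset.sum_congr rfl fun l _ => Finset.sum_congr rfl fun m _ => by ring

section Aux
variable {N M : ℕ} (k : Fin N)

lemma oracleHat_conjT : (oracleHat (N := N) (M := M) k)ᴴ = oracleHat k := by
  ext i j
  by_cases h : i = j
  · subst h
    simp only [Matrix.conjTranspose_apply, oracleHat, Matrix.diagonal_apply_eq]
    split_ifs <;> simp
  · simp [oracleHat, Matrix.conjTranspose_apply, Matrix.diagonal_apply_ne _ h,
      Matrix.diagonal_apply_ne _ (Ne.symm h)]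

lemma oracleHat_mul_self : oracleHat (N := N) (M := M) k * oracleHat k = 1 := by
  unfold oracleHat
  rw [Matrix.diagonal_mul_diagonal]
  ext i j
  by_cases h : i = j
  · subst h
    simp only [Matrix.diagonal_apply_eq, Matrix.one_apply_eq]
    split_ifs <;> norm_num
  · simp [Matrix.diagonal_apply_ne _ h, Matrix.one_apply_ne h]

lemma conj_apply (A : Matrix (Fin N × Fin M) (Fin N × Fin M) ℂ) (i j : Fin N × Fin M) :
    ((oracleHat k * A * (oracleHat k)ᴴ : Matrix (Fin N × Fin M) (Fin N × Fin M) ℂ)) i j =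
      (if i.1 = k then -1 else 1) * A i j * (if j.1 = k then -1 else 1) := by
  rw [oracleHat_conjT]
  unfold oracleHat
  rw [Matrix.mul_diagonal, Matrix.diagonal_mul]

lemma faultyOracle_add (p : ℝ) (A B : Matrix (Fin N × Fin M) (Fin N × Fin M) ℂ) :
    faultyOracle p k (A + B) = faultyOracle p k A + faultyOracle p k B := by
  simp only [faultyOracle, Matrix.mul_add, Matrix.add_mul, smul_add]
  abel

lemma faultyOracle_trace (p : ℝ) (A : Matrix (Fin N × Fin M) (Fin N × Fin M) ℂ) :
    (faultyOracle p k A).trace = A.trace := by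
  have h : (oracleHat (M := M) k * A * (oracleHat k)ᴴ).trace = A.trace := by
    rw [Matrix.trace_mul_cycle, oracleHat_conjT, oracleHat_mul_self, Matrix.one_mul]
  simp [faultyOracle, h]
  ring

lemma trace_unitary_conj {U A : Matrix (Fin N × Fin M) (Fin N × Fin M) ℂ}
    (hU : U ∈ Matrix.unitaryGroup (Fin N × Fin M) ℂ) :
    (U * A * Uᴴ).trace = A.trace := by
  rw [Matrix.trace_mul_cycle, ← Matrix.star_eq_conjTranspose, hU.1, Matrix.one_mul]

lemma key_eq (p : ℝ) (ψv : Fin N × Fin M → ℂ) :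
    faultyOracle p k (outer ψv) =
      outer (ψv - ((2 * (1 - p) : ℝ) : ℂ) • projVec k ψv)
        + ((4 * p * (1 - p) : ℝ) : ℂ) • outer (projVec k ψv) := by
  ext i j
  have hc := conj_apply k (outer ψv) i j
  simp only [faultyOracle, Matrix.add_apply, Matrix.smul_apply, smul_eq_mul, hc]
  by_cases hi : i.1 = k <;> by_cases hj : j.1 = k <;>
    simp [outer, Matrix.vecMulVec_apply, projVec, hi, hj, Complex.conj_ofReal] <;>
      push_cast <;> ring

lemma projVec_sum_sq (v : Fin N × Fin M → ℂ) :
    ∑ x, ‖projVec k v x‖ ^ 2 = ∑ b, ‖v (k, b)‖ ^ 2 := by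
  rw [Fintype.sum_prod_type, Finset.sum_eq_single k]
  · simp [projVec]
  · intro a _ ha
    simp [projVec, ha]
  · simp

end Aux

/-- Monotonicity of the residue: the residues satisfy the stated recursion, their
traces accumulate `4p(1-p)‖α^k_{t,k}‖²` per step, and hence
`‖ψ^k_T‖² = 1 - 4p(1-p)Σ_t‖α^k_{t,k}‖²`. -/
theorem residue_recursion {N M T : ℕ} (p : ℝ) (hp0 : 0 < p) (hp1 : p < 1) (k : Fin N)
    (U : ℕ → Matrix (Fin N × Fin M) (Fin N × Fin M) ℂ)
    (hU : ∀ t, U t ∈ Matrix.unitaryGroup (Fin N × Fin M) ℂ)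
    (ψ₀ : Fin N × Fin M → ℂ) (hψ₀ : ∑ x, ‖ψ₀ x‖ ^ 2 = 1)
    (ρ ρhat : ℕ → Matrix (Fin N × Fin M) (Fin N × Fin M) ℂ)
    (ψ ψhat : ℕ → Fin N × Fin M → ℂ)
    (R : ℕ → Matrix (Fin N × Fin M) (Fin N × Fin M) ℂ)
    (hρhat0 : ρhat 0 = outer ψ₀)
    (hρ : ∀ t, ρ t = U t * ρhat t * (U t)ᴴ)
    (hρhatS : ∀ t, ρhat (t + 1) = faultyOracle p k (ρ t))
    (hψhat0 : ψhat 0 = ψ₀)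
    (hψ : ∀ t, ψ t = (U t).mulVec (ψhat t))
    (hψhatS : ∀ t, ψhat (t + 1) = ψ t - ((2 * (1 - p) : ℝ) : ℂ) • projVec k (ψ t))
    (hR : ∀ t, ρ t = outer (ψ t) + R t)
    (hR0 : R 0 = 0) :
    (∀ t, R (t + 1) =
        U (t + 1) * (((4 * p * (1 - p) : ℝ) : ℂ) • outer (projVec k (ψ t))
          + faultyOracle p k (R t)) * (U (t + 1))ᴴ) ∧
    (∀ t, (R (t + 1)).trace =
        (R t).trace + ((4 * p * (1 - p) * ∑ b, ‖ψ t (k, b)‖ ^ 2 : ℝ) : ℂ)) ∧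
    ((R T).trace =
        ((4 * p * (1 - p) * ∑ t ∈ Finset.range T, ∑ b, ‖ψ t (k, b)‖ ^ 2 : ℝ) : ℂ)) ∧
    (∑ x, ‖ψ T x‖ ^ 2 =
        1 - 4 * p * (1 - p) * ∑ t ∈ Finset.range T, ∑ b, ‖ψ t (k, b)‖ ^ 2) := by
  have hRrec : ∀ t, R (t + 1) =
      U (t + 1) * (((4 * p * (1 - p) : ℝ) : ℂ) • outer (projVec k (ψ t))
        + faultyOracle p k (R t)) * (U (t + 1))ᴴ := by
    intro t
    have h3 : ρhat (t + 1) = outer (ψhat (t + 1)) +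
        (((4 * p * (1 - p) : ℝ) : ℂ) • outer (projVec k (ψ t)) + faultyOracle p k (R t)) := by
      rw [hρhatS t, hR t, faultyOracle_add, key_eq, hψhatS t, add_assoc]
    have h4 : outer (ψ (t + 1)) = U (t + 1) * outer (ψhat (t + 1)) * (U (t + 1))ᴴ := by
      rw [hψ (t + 1), outer_mulVec]
    have h5 : outer (ψ (t + 1)) + R (t + 1) =
        outer (ψ (t + 1)) + U (t + 1) * (((4 * p * (1 - p) : ℝ) : ℂ) • outer (projVec k (ψ t))
          + faultyOracle p k (R t)) * (U (t + 1))ᴴ := by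
      rw [← hR (t + 1), hρ (t + 1), h3, Matrix.mul_add, Matrix.add_mul, h4]
    exact add_left_cancel h5
  have htr : ∀ t, (R (t + 1)).trace =
      (R t).trace + ((4 * p * (1 - p) * ∑ b, ‖ψ t (k, b)‖ ^ 2 : ℝ) : ℂ) := by
    intro t
    rw [hRrec t, trace_unitary_conj (hU (t + 1)), Matrix.trace_add, Matrix.trace_smul,
      faultyOracle_trace, outer_trace, projVec_sum_sq]
    simp only [smul_eq_mul]
    push_cast
    ring
  have htrT : ∀ T', (R T').trace =
      ((4 * p * (1 - p) * ∑ t ∈ Finset.range T', ∑ b, ‖ψ t (k, b)‖ ^ 2 : ℝ) : ℂ) := by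
    intro T'
    induction T' with
    | zero => simp [hR0]
    | succ n ih =>
      rw [htr n, ih, Finset.sum_range_succ]
      push_cast
      ring
  have htrρhat : ∀ t, (ρhat t).trace = 1 := by
    intro t
    induction t with
    | zero => rw [hρhat0, outer_trace, hψ₀]; norm_num
    | succ n ih =>
      rw [hρhatS n, faultyOracle_trace, hρ n, trace_unitary_conj (hU n), ih]
  refine ⟨hRrec, htr, htrT T, ?_⟩
  have h1 : ((∑ x, ‖ψ T x‖ ^ 2 : ℝ) : ℂ) + (R T).trace = 1 := by
    rw [← outer_trace, ← Matrix.trace_add, ← hR T, hρ T, trace_unitary_conj (hU T), htrρhat T]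
  rw [htrT T] at h1
  have h2 : ((∑ x, ‖ψ T x‖ ^ 2 : ℝ) : ℂ) =
      ((1 - 4 * p * (1 - p) * ∑ t ∈ Finset.range T, ∑ b, ‖ψ t (k, b)‖ ^ 2 : ℝ) : ℂ) := by
    push_cast
    push_cast at h1
    linear_combination h1
  exact_mod_cast h2
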